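/- For m ≥ 2, let B_m be the bipartite graph with parts X = {1,…,m} and Y = {1,…,2m} (disjoint copies) where, for x ∈ X with x ≤ m−1, x is adjacent to y ∈ Y iff y = x or y = m−1+x, and the vertex x = m is adjacent to y ∈ Y iff m ≤ y ≤ 2m−2. Then im(B_m) = m − 1 and mis(B_m) = 2^m − 1. -/
import Mathlib


/-- A set of vertices is independent in `G` if it spans no edge. -/
def IsIndepSet {V : Type*} (G : SimpleGraph V) (s : Set V) : Prop :=
  ∀ ⦃x⦄, x ∈ s → ∀ ⦃y⦄, y ∈ s → ¬ G.Adj x y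

/-- A maximal independent set. -/
def IsMaxIndepSet {V : Type*} (G : SimpleGraph V) (s : Set V) : Prop :=
  IsIndepSet G s ∧ ∀ t, IsIndepSet G t → s ⊆ t → s = t

/-- `mis G` is the number of maximal independent sets of `G`. -/
noncomputable def mis {V : Type*} (G : SimpleGraph V) : ℕ :=
  Nat.card {s : Set V // IsMaxIndepSet G s}

/-- `S` induces a triangle matching: within `S`, every vertex has exactly two
neighbours, and these two neighbours are adjacent; so `G[S]` is a vertex-disjoint
union of triangles. -/
def IsInducedTriangleMatching {V : Type*} (G : SimpleGraph V) (S : Finset V) : Prop :=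
  ∀ x ∈ S, ∃ y ∈ S, ∃ z ∈ S, G.Adj x y ∧ G.Adj x z ∧ G.Adj y z ∧
    ∀ w ∈ S, G.Adj x w → w = y ∨ w = z

/-- `itm G`: the largest number of triangles in an induced triangle matching. -/
noncomputable def itm {V : Type*} (G : SimpleGraph V) : ℕ :=
  sSup {k | ∃ S : Finset V, S.card = 3 * k ∧ IsInducedTriangleMatching G S}

/-- `S` induces a matching: within `S`, every vertex has exactly one neighbour. -/
def IsInducedMatching {V : Type*} (G : SimpleGraph V) (S : Finset V) : Prop :=
  ∀ x ∈ S, ∃ y ∈ S, G.Adj x y ∧ ∀ z ∈ S, G.Adj x z → z = y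

/-- `im G`: the largest number of edges in an induced matching. -/
noncomputable def im {V : Type*} (G : SimpleGraph V) : ℕ :=
  sSup {k | ∃ S : Finset V, S.card = 2 * k ∧ IsInducedMatching G S}

/-- The neighbourhood of a set of vertices. -/
def nbhd {V : Type*} (G : SimpleGraph V) (S : Set V) : Set V :=
  {y | ∃ x ∈ S, G.Adj x y}

/-- A set `J` is irredundant if no member's neighbourhood is covered by the
neighbourhoods of the other members. -/
def Irredundant {V : Type*} (G : SimpleGraph V) (J : Set V) : Prop :=
  ∀ x ∈ J, ¬ (G.neighborSet x ⊆ nbhd G (J \ {x}))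

/-- `irr G X`: the number of irredundant subsets of `X`. -/
noncomputable def irr {V : Type*} (G : SimpleGraph V) (X : Set V) : ℕ :=
  Nat.card {J : Set V // J ⊆ X ∧ Irredundant G J}

/-- The graph `Bm m` on `X = Fin m` and `Y = Fin (2*m)` (0-indexed version of the
paper's 1-indexed construction): for `x` with `x + 1 ≤ m - 1`, `x ~ y` iff `y = x` or
`y = (m-1) + x`; the last vertex `x = m - 1` of `X` is adjacent to `y` iff
`m - 1 ≤ y ≤ 2*m - 3`. -/
def Bgraph (m : ℕ) : SimpleGraph (Fin m ⊕ Fin (2 * m)) :=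
  SimpleGraph.fromRel (fun a b =>
    match a, b with
    | Sum.inl x, Sum.inr y =>
        (x.val < m - 1 ∧ (y.val = x.val ∨ y.val = m - 1 + x.val)) ∨
        (x.val = m - 1 ∧ m - 1 ≤ y.val ∧ y.val ≤ 2 * m - 3)
    | _, _ => False)

/- ==== auxiliary development (to be inserted above the theorem) ==== -/
section Aux

open Sum

variable {m : ℕ}

private lemma badj {x : Fin m} {y : Fin (2 * m)} :
    (Bgraph m).Adj (inl x) (inr y) ↔
      ((x.val < m - 1 ∧ (y.val = x.val ∨ y.val = m - 1 + x.val)) ∨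
        (x.val = m - 1 ∧ m - 1 ≤ y.val ∧ y.val ≤ 2 * m - 3)) := by
  simp [Bgraph, SimpleGraph.fromRel_adj]

private lemma badj' {x : Fin m} {y : Fin (2 * m)} :
    (Bgraph m).Adj (inr y) (inl x) ↔
      ((x.val < m - 1 ∧ (y.val = x.val ∨ y.val = m - 1 + x.val)) ∨
        (x.val = m - 1 ∧ m - 1 ≤ y.val ∧ y.val ≤ 2 * m - 3)) := by
  rw [SimpleGraph.adj_comm]; exact badj

private lemma not_adj_ll {x x' : Fin m} : ¬ (Bgraph m).Adj (inl x) (inl x') := by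
  simp [Bgraph, SimpleGraph.fromRel_adj]

private lemma not_adj_rr {y y' : Fin (2 * m)} : ¬ (Bgraph m).Adj (inr y) (inr y') := by
  simp [Bgraph, SimpleGraph.fromRel_adj]

open scoped Classical in
private noncomputable def pick (G : SimpleGraph (Fin m ⊕ Fin (2 * m)))
    (S : Finset (Fin m ⊕ Fin (2 * m))) (v : Fin m ⊕ Fin (2 * m)) :
    Fin m ⊕ Fin (2 * m) :=
  if h : ∃ y ∈ S, G.Adj v y ∧ ∀ z ∈ S, G.Adj v z → z = y then h.choose else v

private lemma pick_spec {G : SimpleGraph (Fin m ⊕ Fin (2 * m))}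
    {S : Finset (Fin m ⊕ Fin (2 * m))} (hS : IsInducedMatching G S)
    {v : Fin m ⊕ Fin (2 * m)} (hv : v ∈ S) :
    pick G S v ∈ S ∧ G.Adj v (pick G S v) ∧ ∀ z ∈ S, G.Adj v z → z = pick G S v := by
  have h : ∃ y ∈ S, G.Adj v y ∧ ∀ z ∈ S, G.Adj v z → z = y := hS v hv
  rw [pick, dif_pos h]
  obtain ⟨h1, h2, h3⟩ := h.choose_spec
  exact ⟨h1, h2, h3⟩

private lemma im_ub (hm : 2 ≤ m) {k : ℕ} {S : Finset (Fin m ⊕ Fin (2 * m))}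
    (hcard : S.card = 2 * k) (hS : IsInducedMatching (Bgraph m) S) : k ≤ m - 1 := by
  classical
  set G := Bgraph m with hG
  set SL := S.filter (fun v => v.isLeft) with hSL
  set SR := S.filter (fun v => ¬ v.isLeft) with hSR
  have hsplit : SL.card + SR.card = 2 * k := by
    rw [hSL, hSR, Finset.card_filter_add_card_filter_not, hcard]
  -- injection from SR into SL via pick
  have hmapsto : ∀ v ∈ SR, pick G S v ∈ SL := by
    intro v hv
    rw [hSR, Finset.mem_filter] at hv
    obtain ⟨hvS, hvR⟩ := hv
    obtain ⟨h1, h2, _⟩ := pick_spec hS hvS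
    rw [hSL, Finset.mem_filter]
    refine ⟨h1, ?_⟩
    match v, hvR with
    | inr y, _ =>
      match hp : pick G S (inr y) with
      | inl x => rfl
      | inr y' => rw [hp] at h2; exact absurd h2 not_adj_rr
  have hinj : Set.InjOn (pick G S) SR := by
    intro v1 hv1 v2 hv2 heq
    rw [Finset.mem_coe, hSR, Finset.mem_filter] at hv1 hv2
    obtain ⟨h11, h12, h13⟩ := pick_spec hS hv1.1
    have hwS : pick G S v1 ∈ S := h11
    obtain ⟨g1, g2, g3⟩ := pick_spec hS hwS
    have e1 : v1 = pick G S (pick G S v1) := g3 v1 hv1.1 h12.symm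
    obtain ⟨h21, h22, _⟩ := pick_spec hS hv2.1
    have h22' : G.Adj (pick G S v1) v2 := by rw [heq]; exact h22.symm
    have e2 : v2 = pick G S (pick G S v1) := g3 v2 hv2.1 h22'
    rw [e1, e2]
  have hcardle : SR.card ≤ SL.card :=
    Finset.card_le_card_of_injOn _ hmapsto hinj
  -- SL ⊆ image of inl
  have hSLsub : SL ⊆ Finset.univ.image inl := by
    intro v hv
    rw [hSL, Finset.mem_filter] at hv
    match v, hv.2 with
    | inl x, _ => exact Finset.mem_image.2 ⟨x, Finset.mem_univ _, rfl⟩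
  have himg : (Finset.univ.image (inl : Fin m → Fin m ⊕ Fin (2 * m))).card = m := by
    rw [Finset.card_image_of_injective _ Sum.inl_injective, Finset.card_univ, Fintype.card_fin]
  have hSLm : SL.card ≤ m := le_trans (Finset.card_le_card hSLsub) (le_of_eq himg)
  by_contra hk
  have hkm : m ≤ k := by omega
  have hSLeq : SL.card = m := by omega
  have hfull : SL = Finset.univ.image inl :=
    Finset.eq_of_subset_of_card_le hSLsub (by omega)
  have hall : ∀ x : Fin m, inl x ∈ S := by
    intro x
    have : inl x ∈ SL := by
      rw [hfull]; exact Finset.mem_image.2 ⟨x, Finset.mem_univ _, rfl⟩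
    rw [hSL, Finset.mem_filter] at this; exact this.1
  -- derive contradiction
  set x0 : Fin m := ⟨m - 1, by omega⟩ with hx0
  have hx0S : inl x0 ∈ S := hall x0
  obtain ⟨p1, p2, _⟩ := pick_spec hS hx0S
  match hp : pick G S (inl x0) with
  | inl x' => rw [hp] at p2; exact not_adj_ll p2
  | inr y =>
    rw [hp] at p1 p2
    have hy : m - 1 ≤ y.val ∧ y.val ≤ 2 * m - 3 := by
      rcases badj.1 p2 with ⟨h, _⟩ | ⟨_, h⟩
      · exact absurd (h : m - 1 < m - 1) (lt_irrefl _)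
      · exact h
    set x1 : Fin m := ⟨y.val - (m - 1), by omega⟩ with hx1
    have hx1S : inl x1 ∈ S := hall x1
    have hadj1 : G.Adj (inl x1) (inr y) := by
      rw [hG, badj]
      exact Or.inl ⟨by show y.val - (m - 1) < m - 1; omega,
        Or.inr (by show y.val = m - 1 + (y.val - (m - 1)); omega)⟩
    obtain ⟨q1, q2, q3⟩ := pick_spec hS p1
    have e0 : inl x0 = pick G S (inr y) := q3 _ hx0S p2.symm
    have e1 : inl x1 = pick G S (inr y) := q3 _ hx1S hadj1.symm
    have : x0 = x1 := by
      exact inl_injective (e0.trans e1.symm)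
    rw [hx0, hx1, Fin.mk.injEq] at this
    omega

private lemma im_lb (hm : 2 ≤ m) :
    ∃ S : Finset (Fin m ⊕ Fin (2 * m)), S.card = 2 * (m - 1) ∧
      IsInducedMatching (Bgraph m) S := by
  have h1 : m - 1 < m := by omega
  have h2 : m - 1 < 2 * m := by omega
  refine ⟨(Finset.Iio (⟨m - 1, h1⟩ : Fin m)).disjSum
      (Finset.Iio (⟨m - 1, h2⟩ : Fin (2 * m))), ?_, ?_⟩
  · rw [Finset.card_disjSum, Fin.card_Iio, Fin.card_Iio]
    show m - 1 + (m - 1) = 2 * (m - 1); omega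
  · intro v hv
    match v with
    | inl x =>
      rw [Finset.inl_mem_disjSum, Finset.mem_Iio, Fin.lt_def] at hv
      replace hv : x.val < m - 1 := hv
      refine ⟨inr ⟨x.val, by omega⟩, ?_, ?_, ?_⟩
      · rw [Finset.inr_mem_disjSum, Finset.mem_Iio, Fin.lt_def]; exact hv
      · rw [badj]; exact Or.inl ⟨hv, Or.inl rfl⟩
      · intro z hz hadj
        match z with
        | inl x' => exact absurd hadj not_adj_ll
        | inr y =>
          rw [Finset.inr_mem_disjSum, Finset.mem_Iio, Fin.lt_def] at hz
          replace hz : y.val < m - 1 := hz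
          rcases badj.1 hadj with ⟨_, hy | hy⟩ | ⟨hx, _⟩
          · congr 1; exact Fin.ext hy
          · exfalso; omega
          · exfalso; omega
    | inr y =>
      rw [Finset.inr_mem_disjSum, Finset.mem_Iio, Fin.lt_def] at hv
      replace hv : y.val < m - 1 := hv
      refine ⟨inl ⟨y.val, by omega⟩, ?_, ?_, ?_⟩
      · rw [Finset.inl_mem_disjSum, Finset.mem_Iio, Fin.lt_def]; exact hv
      · rw [badj']; exact Or.inl ⟨hv, Or.inl rfl⟩
      · intro z hz hadj
        match z with
        | inr y' => exact absurd hadj not_adj_rr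
        | inl x =>
          rw [Finset.inl_mem_disjSum, Finset.mem_Iio, Fin.lt_def] at hz
          replace hz : x.val < m - 1 := hz
          rcases badj'.1 hadj with ⟨_, hy | hy⟩ | ⟨hx, _⟩
          · congr 1; exact Fin.ext hy.symm
          · exfalso; omega
          · exfalso; omega

private lemma im_eq (hm : 2 ≤ m) : im (Bgraph m) = m - 1 := by
  rw [im]
  apply le_antisymm
  · apply csSup_le
    · exact ⟨m - 1, im_lb hm⟩
    · rintro k ⟨S, h1, h2⟩
      exact im_ub hm h1 h2
  · apply le_csSup
    · exact ⟨m - 1, by rintro k ⟨S, h1, h2⟩; exact im_ub hm h1 h2⟩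
    · exact im_lb hm

private def Abad (m : ℕ) : Set (Fin m) := {x | x.val < m - 1}

private def sA (m : ℕ) (A : Set (Fin m)) : Set (Fin m ⊕ Fin (2 * m)) :=
  {v | Sum.elim (fun x => x ∈ A)
      (fun y => ∀ a ∈ A, ¬ (Bgraph m).Adj (inl a) (inr y)) v}

private lemma sA_indep (A : Set (Fin m)) : IsIndepSet (Bgraph m) (sA m A) := by
  intro u hu v hv hadj
  match u, v with
  | inl x, inl x' => exact not_adj_ll hadj
  | inr y, inr y' => exact not_adj_rr hadj
  | inl x, inr y => exact hv x hu hadj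
  | inr y, inl x => exact hu x hv hadj.symm

private lemma sA_max (hm : 2 ≤ m) (A : Set (Fin m)) (hA : A ≠ Abad m) :
    IsMaxIndepSet (Bgraph m) (sA m A) := by
  refine ⟨sA_indep A, ?_⟩
  intro t ht hsub
  refine Set.Subset.antisymm hsub ?_
  intro v hv
  match v with
  | inl x =>
    show x ∈ A
    by_contra hx
    rcases Nat.lt_or_ge x.val (m - 1) with hlt | hge
    · have hy : inr (⟨x.val, by omega⟩ : Fin (2 * m)) ∈ sA m A := by
        intro a ha hadj
        rcases badj.1 hadj with ⟨ha1, h | h⟩ | ⟨ha1, ha2, ha3⟩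
        · replace h : x.val = a.val := h
          exact hx (by rwa [show x = a from Fin.ext h])
        · replace h : x.val = m - 1 + a.val := h; omega
        · replace ha2 : m - 1 ≤ x.val := ha2; omega
      have hadj : (Bgraph m).Adj (inl x) (inr ⟨x.val, by omega⟩) :=
        badj.2 (Or.inl ⟨hlt, Or.inl rfl⟩)
      exact ht hv (hsub hy) hadj
    · have hxval : x.val = m - 1 := by have := x.isLt; omega
      have hAsub : A ⊆ Abad m := by
        intro a ha
        show a.val < m - 1
        by_contra h
        have haval : a.val = m - 1 := by have := a.isLt; omega
        have : a = x := Fin.ext (by omega)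
        exact hx (this ▸ ha)
      obtain ⟨i, hi1, hi2⟩ := Set.exists_of_ssubset (hAsub.ssubset_of_ne hA)
      replace hi1 : i.val < m - 1 := hi1
      have hy : inr (⟨m - 1 + i.val, by omega⟩ : Fin (2 * m)) ∈ sA m A := by
        intro a ha hadj
        rcases badj.1 hadj with ⟨ha1, h | h⟩ | ⟨ha1, ha2, ha3⟩
        · replace h : m - 1 + i.val = a.val := h
          have : a.val < m - 1 := hAsub ha; omega
        · replace h : m - 1 + i.val = m - 1 + a.val := h
          have : a = i := Fin.ext (by omega)
          exact hi2 (this ▸ ha)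
        · have : a.val < m - 1 := hAsub ha; omega
      have hadj : (Bgraph m).Adj (inl x) (inr ⟨m - 1 + i.val, by omega⟩) := by
        rw [badj]
        exact Or.inr ⟨hxval, by show m - 1 ≤ m - 1 + i.val; omega,
          by show m - 1 + i.val ≤ 2 * m - 3; omega⟩
      exact ht hv (hsub hy) hadj
  | inr y =>
    intro a ha hadj
    exact ht (hsub ha) hv hadj

private lemma Asub_ne (hm : 2 ≤ m) {s : Set (Fin m ⊕ Fin (2 * m))}
    (hs : IsMaxIndepSet (Bgraph m) s) : {x | inl x ∈ s} ≠ Abad m := by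
  intro hA
  set x0 : Fin m := ⟨m - 1, by omega⟩ with hx0
  have hx0s : inl x0 ∉ s := by
    intro h
    have h1 : x0 ∈ {x | Sum.inl x ∈ s} := h
    rw [hA] at h1
    have h2 : (m : ℕ) - 1 < m - 1 := h1
    omega
  have key : ∀ v ∈ s, ¬ (Bgraph m).Adj (inl x0) v := by
    intro v hv hadj
    match v with
    | inl x' => exact not_adj_ll hadj
    | inr y =>
      rcases badj.1 hadj with ⟨h1, _⟩ | ⟨_, h2, h3⟩
      · have h2 : (m : ℕ) - 1 < m - 1 := h1
        omega
      · set i : Fin m := ⟨y.val - (m - 1), by omega⟩ with hi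
        have his : inl i ∈ s := by
          have h2' : i ∈ Abad m := by show y.val - (m - 1) < m - 1; omega
          rw [← hA] at h2'
          exact h2'
        have hadj2 : (Bgraph m).Adj (inl i) (inr y) := by
          rw [badj]
          exact Or.inl ⟨by show y.val - (m - 1) < m - 1; omega,
            Or.inr (by show y.val = m - 1 + (y.val - (m - 1)); omega)⟩
        exact hs.1 his hv hadj2
  have hindep : IsIndepSet (Bgraph m) (insert (inl x0) s) := by
    intro u hu w hw hadj
    rcases Set.mem_insert_iff.1 hu with hu | hu <;>
      rcases Set.mem_insert_iff.1 hw with hw | hw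
    · rw [hu, hw] at hadj; exact not_adj_ll hadj
    · rw [hu] at hadj; exact key w hw hadj
    · rw [hw] at hadj; exact key u hu hadj.symm
    · exact hs.1 hu hw hadj
  have heq := hs.2 _ hindep (Set.subset_insert _ _)
  exact hx0s (heq ▸ Set.mem_insert _ _)

private lemma sA_of_max {s : Set (Fin m ⊕ Fin (2 * m))}
    (hs : IsMaxIndepSet (Bgraph m) s) : sA m {x | inl x ∈ s} = s := by
  ext v
  match v with
  | inl x => exact Iff.rfl
  | inr y =>
    constructor
    · intro h
      by_contra hy
      have hindep : IsIndepSet (Bgraph m) (insert (inr y) s) := by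
        intro u hu w hw hadj
        rcases Set.mem_insert_iff.1 hu with hu | hu <;>
          rcases Set.mem_insert_iff.1 hw with hw | hw
        · rw [hu, hw] at hadj; exact not_adj_rr hadj
        · rw [hu] at hadj
          match w, hw with
          | inl a, hw => exact h a hw hadj.symm
          | inr y', hw => exact not_adj_rr hadj
        · rw [hw] at hadj
          match u, hu with
          | inl a, hu => exact h a hu hadj
          | inr y', hu => exact not_adj_rr hadj
        · exact hs.1 hu hw hadj
      have heq := hs.2 _ hindep (Set.subset_insert _ _)
      exact hy (heq ▸ Set.mem_insert _ _)
    · intro h a ha hadj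
      exact hs.1 ha h hadj

private lemma mis_eq (hm : 2 ≤ m) : mis (Bgraph m) = 2 ^ m - 1 := by
  classical
  rw [mis]
  have e : {A : Set (Fin m) // A ≠ Abad m} ≃
      {s : Set (Fin m ⊕ Fin (2 * m)) // IsMaxIndepSet (Bgraph m) s} :=
    { toFun := fun A => ⟨sA m A.1, sA_max hm A.1 A.2⟩
      invFun := fun s => ⟨{x | inl x ∈ s.1}, Asub_ne hm s.2⟩
      left_inv := fun A => Subtype.ext rfl
      right_inv := fun s => Subtype.ext (sA_of_max s.2) }
  rw [Nat.card_congr e.symm, Nat.card_eq_fintype_card]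
  have h1 := Fintype.card_subtype_compl (fun A : Set (Fin m) => A = Abad m)
  rw [Fintype.card_set, Fintype.card_fin, Fintype.card_subtype_eq] at h1
  convert h1 using 2


end Aux

theorem im_mis_Bgraph (m : ℕ) (hm : 2 ≤ m) :
    im (Bgraph m) = m - 1 ∧ mis (Bgraph m) = 2 ^ m - 1 := by
  exact ⟨im_eq hm, mis_eq hm⟩
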